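/- Let γ ∈ (0,1), and let T be the distributional Bellman operator on the finite product Δ([0,1/(1−γ)])^S of probability-measure vectors defined by [Tη](s) = ∑_{a,s'} π(a|s) P(s'|s,a) ∫₀¹ (b_{r,γ})_# η(s') 𝒫_R(dr|s,a), where b_{r,γ}(x) = r + γx. Then T is a γ-contraction in the metric sup_{s∈S} W₁(η(s), η'(s)): sup_s W₁([Tη](s), [Tη'](s)) ≤ γ · sup_s W₁(η(s), η'(s)). -/

import Mathlib

open MeasureTheory Set
open scoped ENNReal

/-- The 1-Wasserstein distance between two measures on `ℝ`. -/
noncomputable def W1 (μ ν : Measure ℝ) : ℝ≥0∞ :=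
  ⨅ (κ : Measure (ℝ × ℝ)) (_ : κ.map Prod.fst = μ ∧ κ.map Prod.snd = ν),
    ∫⁻ q, edist q.1 q.2 ∂κ

/-- The distributional Bellman operator:
`[Tη](s) = ∑_{a,s'} π(a|s) P(s'|s,a) ∫ (b_{r,γ})_# η(s') 𝒫_R(dr|s,a)`. -/
noncomputable def bellman {S A : Type*} [Fintype S] [Fintype A]
    (γ : ℝ) (pol : S → A → ℝ≥0∞) (P : S → A → S → ℝ≥0∞)
    (R : S → A → Measure ℝ) (η : S → Measure ℝ) : S → Measure ℝ :=
  fun s => ∑ a : A, ∑ s' : S, (pol s a * P s a s') •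
    ((R s a).bind (fun r => (η s').map (fun x => r + γ * x)))

/-- Parametric measurability of pushforward. -/
lemma measurable_map_param {α β γ : Type*} [MeasurableSpace α] [MeasurableSpace β]
    [MeasurableSpace γ] (μ : Measure β) [SFinite μ] {F : α → β → γ}
    (hF : Measurable (Function.uncurry F)) :
    Measurable fun a => μ.map (F a) := by
  apply Measure.measurable_of_measurable_coe
  intro s hs
  have hFa : ∀ a, Measurable (F a) := fun a =>
    hF.comp (measurable_const.prodMk measurable_id)
  simp_rw [Measure.map_apply (hFa _) hs]
  have : ∀ a, μ (F a ⁻¹' s) = ∫⁻ b, s.indicator (fun _ => (1 : ℝ≥0∞)) (F a b) ∂μ := by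
    intro a
    rw [← lintegral_indicator_one (hFa a hs)]
    rfl
  simp_rw [this]
  exact Measurable.lintegral_prod_right
    ((measurable_one.indicator hs).comp hF)

lemma map_bind' {α β γ : Type*} [MeasurableSpace α] [MeasurableSpace β] [MeasurableSpace γ]
    (m : Measure α) {f : α → Measure β} (hf : Measurable f) {g : β → γ} (hg : Measurable g) :
    (m.bind f).map g = m.bind (fun a => (f a).map g) := by
  ext t ht
  rw [Measure.map_apply hg ht, Measure.bind_apply (hg ht) hf.aemeasurable,
    Measure.bind_apply (f := fun a => (f a).map g) ht ((Measure.measurable_map g hg).comp hf).aemeasurable]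
  simp_rw [Measure.map_apply hg ht]

/-- The distributional Bellman operator is a `γ`-contraction with
respect to the supremum 1-Wasserstein metric on vectors of probability measures
supported on `[0, 1/(1-γ)]`. -/
theorem bellman_contraction_W1
    {S A : Type*} [Fintype S] [Fintype A] [Nonempty S] [Nonempty A]
    (γ : ℝ) (hγ : γ ∈ Set.Ioo (0 : ℝ) 1)
    (pol : S → A → ℝ≥0∞) (hpol : ∀ s, ∑ a : A, pol s a = 1)
    (P : S → A → S → ℝ≥0∞) (hP : ∀ s a, ∑ s' : S, P s a s' = 1)
    (R : S → A → Measure ℝ) (hRprob : ∀ s a, IsProbabilityMeasure (R s a))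
    (hRsupp : ∀ s a, R s a (Set.Icc (0 : ℝ) 1)ᶜ = 0)
    (η η' : S → Measure ℝ)
    (hη : ∀ s, IsProbabilityMeasure (η s)) (hη' : ∀ s, IsProbabilityMeasure (η' s))
    (hηsupp : ∀ s, η s (Set.Icc (0 : ℝ) (1 / (1 - γ)))ᶜ = 0)
    (hη'supp : ∀ s, η' s (Set.Icc (0 : ℝ) (1 / (1 - γ)))ᶜ = 0) :
    (⨆ s : S, W1 (bellman γ pol P R η s) (bellman γ pol P R η' s)) ≤
      ENNReal.ofReal γ * ⨆ s : S, W1 (η s) (η' s) := by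
  obtain ⟨hγ0, hγ1⟩ := hγ
  have hγne : ENNReal.ofReal γ ≠ 0 := by
    simp only [ne_eq, ENNReal.ofReal_eq_zero, not_le]; exact hγ0
  set M := ⨆ s : S, W1 (η s) (η' s) with hMdef
  refine iSup_le fun s => ?_
  by_cases hMtop : M = ⊤
  · rw [hMtop, ENNReal.mul_top hγne]; exact le_top
  have hMlt : M < ⊤ := lt_top_iff_ne_top.2 hMtop
  have hW1le : ∀ s' : S, W1 (η s') (η' s') ≤ M := fun s' => by rw [hMdef]; exact le_iSup (fun t => W1 (η t) (η' t)) s'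
  refine ENNReal.le_of_forall_pos_le_add fun ε hε _ => ?_
  -- choose near-optimal couplings
  have hch : ∀ s' : S, ∃ κ : Measure (ℝ × ℝ),
      (κ.map Prod.fst = η s' ∧ κ.map Prod.snd = η' s') ∧
      ∫⁻ q, edist q.1 q.2 ∂κ ≤ M + ε := by
    intro s'
    have hlt : W1 (η s') (η' s') < W1 (η s') (η' s') + ε :=
      ENNReal.lt_add_right ((hW1le s').trans_lt hMlt).ne (by exact_mod_cast hε.ne')
    obtain ⟨κ, hκ⟩ := iInf_lt_iff.mp
      (show (⨅ (κ : Measure (ℝ × ℝ)) (_ : κ.map Prod.fst = η s' ∧ κ.map Prod.snd = η' s'),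
        ∫⁻ q, edist q.1 q.2 ∂κ) < W1 (η s') (η' s') + ε from hlt)
    obtain ⟨hm, hcost⟩ := iInf_lt_iff.mp hκ
    exact ⟨κ, hm, hcost.le.trans (add_le_add (hW1le s') le_rfl)⟩
  choose κ hmarg hcost using hch
  have hκprob : ∀ s', IsProbabilityMeasure (κ s') := by
    intro s'
    constructor
    have h := congrArg (fun μ : Measure ℝ => μ Set.univ) (hmarg s').1
    simpa [Measure.map_apply measurable_fst MeasurableSet.univ,
      (hη s').measure_univ] using h
  set F : ℝ → ℝ × ℝ → ℝ × ℝ := fun r q => (r + γ * q.1, r + γ * q.2) with hFdef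
  have hFm : Measurable (Function.uncurry F) := by
    apply Measurable.prod
    · exact measurable_fst.add ((measurable_fst.comp measurable_snd).const_mul γ)
    · exact measurable_fst.add ((measurable_snd.comp measurable_snd).const_mul γ)
  have hFr : ∀ r, Measurable (F r) := fun r =>
    hFm.comp (measurable_const.prodMk measurable_id)
  have hmapmeas : ∀ s', Measurable fun r => (κ s').map (F r) := by
    intro s'
    haveI := hκprob s'
    exact measurable_map_param _ hFm
  set lam : A → S → Measure (ℝ × ℝ) :=
    fun a s' => (R s a).bind (fun r => (κ s').map (F r)) with hlamdef
  set K : Measure (ℝ × ℝ) :=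
    ∑ a : A, ∑ s' : S, (pol s a * P s a s') • lam a s' with hKdef
  have hedist_m : Measurable fun q : ℝ × ℝ => edist q.1 q.2 :=
    measurable_fst.edist measurable_snd
  -- marginals
  have hbmul : ∀ r : ℝ, Measurable fun x : ℝ => r + γ * x := fun r =>
    (measurable_id.const_mul γ).const_add r
  have hl1 : ∀ a s', (lam a s').map Prod.fst
      = (R s a).bind (fun r => (η s').map (fun x => r + γ * x)) := by
    intro a s'
    rw [map_bind' _ (hmapmeas s') measurable_fst]
    congr 1
    funext r
    calc ((κ s').map (F r)).map Prod.fst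
        = (κ s').map (Prod.fst ∘ F r) := Measure.map_map measurable_fst (hFr r)
      _ = (κ s').map ((fun x => r + γ * x) ∘ Prod.fst) := rfl
      _ = ((κ s').map Prod.fst).map (fun x => r + γ * x) :=
          (Measure.map_map (hbmul r) measurable_fst).symm
      _ = (η s').map (fun x => r + γ * x) := by rw [(hmarg s').1]
  have hl2 : ∀ a s', (lam a s').map Prod.snd
      = (R s a).bind (fun r => (η' s').map (fun x => r + γ * x)) := by
    intro a s'
    rw [map_bind' _ (hmapmeas s') measurable_snd]
    congr 1
    funext r
    calc ((κ s').map (F r)).map Prod.snd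
        = (κ s').map (Prod.snd ∘ F r) := Measure.map_map measurable_snd (hFr r)
      _ = (κ s').map ((fun x => r + γ * x) ∘ Prod.snd) := rfl
      _ = ((κ s').map Prod.snd).map (fun x => r + γ * x) :=
          (Measure.map_map (hbmul r) measurable_snd).symm
      _ = (η' s').map (fun x => r + γ * x) := by rw [(hmarg s').2]
  have hmargK1 : K.map Prod.fst = bellman γ pol P R η s := by
    ext t ht
    rw [Measure.map_apply measurable_fst ht, bellman]
    simp only [hKdef, Measure.finset_sum_apply, Measure.smul_apply, smul_eq_mul]
    refine Finset.sum_congr rfl fun a _ => Finset.sum_congr rfl fun s' _ => ?_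
    rw [← Measure.map_apply measurable_fst ht, hl1 a s']
  have hmargK2 : K.map Prod.snd = bellman γ pol P R η' s := by
    ext t ht
    rw [Measure.map_apply measurable_snd ht, bellman]
    simp only [hKdef, Measure.finset_sum_apply, Measure.smul_apply, smul_eq_mul]
    refine Finset.sum_congr rfl fun a _ => Finset.sum_congr rfl fun s' _ => ?_
    rw [← Measure.map_apply measurable_snd ht, hl2 a s']
  -- cost of each transported coupling
  have hlamcost : ∀ a s', ∫⁻ q, edist q.1 q.2 ∂(lam a s')
      = ENNReal.ofReal γ * ∫⁻ q, edist q.1 q.2 ∂(κ s') := by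
    intro a s'
    rw [hlamdef]
    rw [Measure.lintegral_bind (hmapmeas s').aemeasurable hedist_m.aemeasurable]
    have hr : ∀ r : ℝ, ∫⁻ q, edist q.1 q.2 ∂((κ s').map (F r))
        = ENNReal.ofReal γ * ∫⁻ q, edist q.1 q.2 ∂(κ s') := by
      intro r
      rw [lintegral_map hedist_m (hFr r), ← lintegral_const_mul _ hedist_m]
      refine lintegral_congr fun q => ?_
      show edist (r + γ * q.1) (r + γ * q.2) = ENNReal.ofReal γ * edist q.1 q.2
      rw [edist_dist, edist_dist, Real.dist_eq, Real.dist_eq]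
      have h1 : r + γ * q.1 - (r + γ * q.2) = γ * (q.1 - q.2) := by ring
      rw [h1, abs_mul, abs_of_pos hγ0, ENNReal.ofReal_mul hγ0.le]
    simp_rw [hr]
    rw [lintegral_const, (hRprob s a).measure_univ, mul_one]
  -- total cost
  have hKcost : ∫⁻ q, edist q.1 q.2 ∂K ≤ ENNReal.ofReal γ * (M + ε) := by
    have hsplit : ∫⁻ q, edist q.1 q.2 ∂K
        = ∑ a : A, ∑ s' : S, (pol s a * P s a s') * ∫⁻ q, edist q.1 q.2 ∂(lam a s') := by
      rw [hKdef, lintegral_finset_sum_measure]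
      refine Finset.sum_congr rfl fun a _ => ?_
      rw [lintegral_finset_sum_measure]
      exact Finset.sum_congr rfl fun s' _ => lintegral_smul_measure _ _
    rw [hsplit]
    calc ∑ a : A, ∑ s' : S, (pol s a * P s a s') * ∫⁻ q, edist q.1 q.2 ∂(lam a s')
        ≤ ∑ a : A, ∑ s' : S, (pol s a * P s a s') * (ENNReal.ofReal γ * (M + ε)) := by
          refine Finset.sum_le_sum fun a _ => Finset.sum_le_sum fun s' _ => ?_
          rw [hlamcost a s']
          exact mul_le_mul' le_rfl (mul_le_mul' le_rfl (hcost s'))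
      _ = (∑ a : A, ∑ s' : S, pol s a * P s a s') * (ENNReal.ofReal γ * (M + ε)) := by
          rw [Finset.sum_mul]
          exact Finset.sum_congr rfl fun a _ => (Finset.sum_mul _ _ _).symm
      _ = ENNReal.ofReal γ * (M + ε) := by
          have : ∑ a : A, ∑ s' : S, pol s a * P s a s' = 1 := by
            simp_rw [← Finset.mul_sum, hP s, mul_one]
            exact hpol s
          rw [this, one_mul]
  -- assemble
  have hWle : W1 (bellman γ pol P R η s) (bellman γ pol P R η' s)
      ≤ ∫⁻ q, edist q.1 q.2 ∂K := iInf₂_le K ⟨hmargK1, hmargK2⟩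
  calc W1 (bellman γ pol P R η s) (bellman γ pol P R η' s)
      ≤ ENNReal.ofReal γ * (M + ε) := hWle.trans hKcost
    _ = ENNReal.ofReal γ * M + ENNReal.ofReal γ * ε := mul_add _ _ _
    _ ≤ ENNReal.ofReal γ * M + ε := by
        refine add_le_add le_rfl ?_
        calc ENNReal.ofReal γ * (ε : ℝ≥0∞) ≤ 1 * ε :=
              mul_le_mul' (ENNReal.ofReal_le_one.2 hγ1.le) le_rfl
          _ = ε := one_mul _
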